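/- Nishimori gauge identity mixing one- and two-bond correlations: for every pair of bonds b, b' ∈ B, [⟨S_b⟩⟨S_{b'}⟩] = [⟨S_b S_{b'}⟩⟨S_{b'}⟩]. -/

import Mathlib

open MeasureTheory ProbabilityTheory Filter

noncomputable section

/-- The real value ±1 of a Boolean spin. -/
def spin (s : Bool) : ℝ := if s then 1 else -1

/-- The bond spin `S_b = S_n S_{n'}` for a bond `b` with endpoints `ep b = (n, n')`. -/
def bondSpin {V ι : Type*} (ep : ι → V × V) (S : V → Bool) (b : ι) : ℝ :=
  spin (S (ep b).1) * spin (S (ep b).2)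

/-- The potential `U(j, S) = Σ_b x_b j_b S_b`. -/
def potential {V ι : Type*} [Fintype ι] (ep : ι → V × V) (x j : ι → ℝ)
    (S : V → Bool) : ℝ :=
  ∑ b, x b * j b * bondSpin ep S b

/-- The partition function `Z(j) = Σ_S exp U(j,S)`. -/
def partitionFn {V ι : Type*} [Fintype V] [DecidableEq V] [Fintype ι]
    (ep : ι → V × V) (x j : ι → ℝ) : ℝ :=
  ∑ S : V → Bool, Real.exp (potential ep x j S)

/-- The Boltzmann–Gibbs expectation `⟨f⟩` at fixed disorder `j`. -/
def gibbs {V ι : Type*} [Fintype V] [DecidableEq V] [Fintype ι]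
    (ep : ι → V × V) (x j : ι → ℝ) (f : (V → Bool) → ℝ) : ℝ :=
  (∑ S : V → Bool, f S * Real.exp (potential ep x j S)) / partitionFn ep x j

/-- The law of the couplings: independent Gaussians, `j_b` of mean `x_b` and variance 1. -/
def couplings {ι : Type*} [Fintype ι] (x : ι → ℝ) : Measure (ι → ℝ) :=
  Measure.pi fun b => gaussianReal (x b) 1

/-- The quenched average `[F]`. -/
def quenched {ι : Type*} [Fintype ι] (x : ι → ℝ) (F : (ι → ℝ) → ℝ) : ℝ :=
  ∫ j, F j ∂(couplings x)

/-- The quenched pressure `P({x}) = [ln Z]`. -/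
def pressure {V ι : Type*} [Fintype V] [DecidableEq V] [Fintype ι]
    (ep : ι → V × V) (x : ι → ℝ) : ℝ :=
  quenched x fun j => Real.log (partitionFn ep x j)

/-! ### Auxiliary algebraic lemmas -/

section SpinAlgebra

lemma spin_beq (a c : Bool) : spin (a == c) = spin a * spin c := by
  cases a <;> cases c <;> simp [spin]

lemma bondSpin_sq {V ι : Type*} (ep : ι → V × V) (S : V → Bool) (b : ι) :
    bondSpin ep S b ^ 2 = 1 := by
  unfold bondSpin
  rcases S (ep b).1 <;> rcases S (ep b).2 <;> norm_num [spin]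

lemma abs_bondSpin {V ι : Type*} (ep : ι → V × V) (S : V → Bool) (b : ι) :
    |bondSpin ep S b| = 1 := by
  unfold bondSpin
  rcases S (ep b).1 <;> rcases S (ep b).2 <;> norm_num [spin]

/-- gauge flip of a spin configuration -/
def gflip {V : Type*} (τ S : V → Bool) : V → Bool := fun v => S v == τ v

lemma gflip_gflip {V : Type*} (τ S : V → Bool) : gflip τ (gflip τ S) = S := by
  funext v; unfold gflip; cases S v <;> cases τ v <;> rfl

def gflipEquiv {V : Type*} (τ : V → Bool) : (V → Bool) ≃ (V → Bool) :=
  ⟨gflip τ, gflip τ, gflip_gflip τ, gflip_gflip τ⟩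

lemma bondSpin_gflip {V ι : Type*} (ep : ι → V × V) (τ S : V → Bool) (b : ι) :
    bondSpin ep (gflip τ S) b = bondSpin ep τ b * bondSpin ep S b := by
  unfold bondSpin gflip
  rw [spin_beq, spin_beq]; ring

/-- gauge transformation of couplings -/
def gtw {V ι : Type*} (ep : ι → V × V) (τ : V → Bool) (j : ι → ℝ) : ι → ℝ :=
  fun b => bondSpin ep τ b * j b

lemma gtw_gtw {V ι : Type*} (ep : ι → V × V) (τ : V → Bool) (j : ι → ℝ) :
    gtw ep τ (gtw ep τ j) = j := by
  funext c
  show bondSpin ep τ c * (bondSpin ep τ c * j c) = j c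
  have h := bondSpin_sq ep τ c
  linear_combination j c * h

lemma potential_gtw {V ι : Type*} [Fintype ι] (ep : ι → V × V) (x j : ι → ℝ)
    (τ S : V → Bool) :
    potential ep x (gtw ep τ j) S = potential ep x j (gflip τ S) := by
  unfold potential gtw
  refine Finset.sum_congr rfl fun c _ => ?_
  rw [bondSpin_gflip]; ring

lemma partitionFn_gtw {V ι : Type*} [Fintype V] [DecidableEq V] [Fintype ι]
    (ep : ι → V × V) (x j : ι → ℝ) (τ : V → Bool) :
    partitionFn ep x (gtw ep τ j) = partitionFn ep x j := by
  unfold partitionFn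
  simp_rw [potential_gtw]
  exact Fintype.sum_equiv (gflipEquiv τ) _ _ (fun S => rfl)

lemma gibbs_gtw {V ι : Type*} [Fintype V] [DecidableEq V] [Fintype ι]
    (ep : ι → V × V) (x j : ι → ℝ) (τ : V → Bool) (f : (V → Bool) → ℝ) :
    gibbs ep x (gtw ep τ j) f = gibbs ep x j (fun S => f (gflip τ S)) := by
  unfold gibbs
  rw [partitionFn_gtw]
  congr 1
  simp_rw [potential_gtw]
  exact Fintype.sum_equiv (gflipEquiv τ) _ _ (fun S => by
    simp [gflipEquiv, gflip_gflip])

lemma gibbs_const_mul {V ι : Type*} [Fintype V] [DecidableEq V] [Fintype ι]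
    (ep : ι → V × V) (x j : ι → ℝ) (c : ℝ) (f : (V → Bool) → ℝ) :
    gibbs ep x j (fun S => c * f S) = c * gibbs ep x j f := by
  unfold gibbs
  rw [show (∑ S : V → Bool, (fun S => c * f S) S * Real.exp (potential ep x j S))
      = c * ∑ S : V → Bool, f S * Real.exp (potential ep x j S) by
    rw [Finset.mul_sum]; exact Finset.sum_congr rfl fun S _ => by ring]
  rw [mul_div_assoc]

lemma gibbs_bound {V ι : Type*} [Fintype V] [DecidableEq V] [Fintype ι]
    (ep : ι → V × V) (x j : ι → ℝ) (f : (V → Bool) → ℝ) (hf : ∀ S, |f S| ≤ 1) :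
    |gibbs ep x j f| ≤ 1 := by
  unfold gibbs
  have hZ : 0 < partitionFn ep x j := by
    apply Finset.sum_pos (fun S _ => Real.exp_pos _)
    exact ⟨fun _ => false, Finset.mem_univ _⟩
  rw [abs_div, abs_of_pos hZ, div_le_one hZ]
  calc |∑ S : V → Bool, f S * Real.exp (potential ep x j S)|
      ≤ ∑ S : V → Bool, |f S * Real.exp (potential ep x j S)| := Finset.abs_sum_le_sum_abs _ _
    _ ≤ ∑ S : V → Bool, Real.exp (potential ep x j S) := by
        refine Finset.sum_le_sum fun S _ => ?_
        rw [abs_mul, abs_of_pos (Real.exp_pos _)]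
        nlinarith [hf S, Real.exp_pos (potential ep x j S)]

lemma measurable_gibbs {V ι : Type*} [Fintype V] [DecidableEq V] [Fintype ι]
    (ep : ι → V × V) (x : ι → ℝ) (f : (V → Bool) → ℝ) :
    Measurable (fun j => gibbs ep x j f) := by
  have hpot : ∀ S : V → Bool, Measurable (fun j : ι → ℝ => potential ep x j S) := by
    intro S
    exact Finset.measurable_sum _ fun c _ =>
      (by fun_prop)
  exact Measurable.div
    (Finset.measurable_sum _ fun S _ => (Real.measurable_exp.comp (hpot S)).const_mul _)
    (Finset.measurable_sum _ fun S _ => Real.measurable_exp.comp (hpot S))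

end SpinAlgebra

/-! ### Product integral lemmas -/

section PiIntegrals

open Set ENNReal NNReal

theorem lintegral_fin_nat_prod_eq_prod'' {n : ℕ} {α : Type*} [MeasurableSpace α]
    (μ : Measure α) [SigmaFinite μ] (f : Fin n → α → ℝ≥0∞) (hf : ∀ i, Measurable (f i)) :
    ∫⁻ x : Fin n → α, ∏ i, f i (x i) ∂(Measure.pi fun _ => μ) = ∏ i, ∫⁻ a, f i a ∂μ := by
  induction n with
  | zero => simp [lintegral_const]
  | succ n ih =>
      have h := (measurePreserving_piFinSuccAbove (fun _ : Fin (n + 1) => μ) 0).symm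
      have hmeas : Measurable fun x : Fin (n + 1) → α => ∏ i, f i (x i) :=
        Finset.measurable_prod _ fun i _ => (hf i).comp (measurable_pi_apply i)
      rw [← h.map_eq, lintegral_map hmeas h.measurable]
      have hptwise : ∀ y : α × (Fin n → α),
          (∏ i, f i ((MeasurableEquiv.piFinSuccAbove (fun _ => α) 0).symm y i))
            = f 0 y.1 * ∏ i : Fin n, f (Fin.succ i) (y.2 i) := by
        intro y
        simp [MeasurableEquiv.piFinSuccAbove_symm_apply, Fin.insertNthEquiv,
          Fin.prod_univ_succ, Fin.insertNth_zero, Equiv.coe_fn_mk, Fin.cons_succ,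
          Fin.zero_succAbove, Fin.cons_zero]
      simp_rw [hptwise]
      rw [lintegral_prod_mul (f := f 0) (g := fun z : Fin n → α => ∏ i : Fin n, f (Fin.succ i) (z i))
        ((hf 0).aemeasurable)
        ((Finset.measurable_prod _ fun i _ =>
          (hf (Fin.succ i)).comp (measurable_pi_apply i)).aemeasurable)]
      rw [ih _ (fun i => hf (Fin.succ i))]
      exact (Fin.prod_univ_succ fun i => ∫⁻ a, f i a ∂μ).symm

theorem lintegral_fintype_prod_eq_prod' {ι : Type*} [Fintype ι] {α : Type*} [MeasurableSpace α]
    (μ : Measure α) [SigmaFinite μ] (f : ι → α → ℝ≥0∞) (hf : ∀ i, Measurable (f i)) :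
    ∫⁻ x : ι → α, ∏ i, f i (x i) ∂(Measure.pi fun _ => μ) = ∏ i, ∫⁻ a, f i a ∂μ := by
  let e := (Fintype.equivFin ι).symm
  have hmp := measurePreserving_piCongrLeft (fun _ : ι => μ) e
  have hmeas : Measurable fun x : ι → α => ∏ i, f i (x i) :=
    Finset.measurable_prod _ fun i _ => (hf i).comp (measurable_pi_apply i)
  rw [← hmp.map_eq, lintegral_map hmeas hmp.measurable]
  have hptwise : ∀ x : Fin (Fintype.card ι) → α,
      (∏ i, f i ((MeasurableEquiv.piCongrLeft (fun _ => α) e) x i))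
        = ∏ k, f (e k) (x k) := by
    intro x
    rw [← e.prod_comp]
    refine Finset.prod_congr rfl fun k _ => ?_
    rw [MeasurableEquiv.piCongrLeft_apply_apply]
  simp_rw [hptwise]
  rw [lintegral_fin_nat_prod_eq_prod'' μ _ (fun k => hf (e k)), ← e.prod_comp]

end PiIntegrals

/-! ### Gaussian density lemmas -/

section GaussDen

open Set ENNReal NNReal

variable {ι : Type*} [Fintype ι]

/-- base Lebesgue measure on the coupling space -/
abbrev baseVol (ι : Type*) [Fintype ι] : Measure (ι → ℝ) :=
  Measure.pi fun _ => (volume : Measure ℝ)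

def gaussDen (x : ι → ℝ) (j : ι → ℝ) : ℝ := ∏ b, gaussianPDFReal (x b) 1 (j b)

lemma gaussDen_nonneg (x j : ι → ℝ) : 0 ≤ gaussDen x j :=
  Finset.prod_nonneg fun _ _ => gaussianPDFReal_nonneg _ _ _

lemma measurable_gaussDen (x : ι → ℝ) : Measurable (gaussDen x) :=
  Finset.measurable_prod _ fun b _ =>
    (measurable_gaussianPDFReal (x b) 1).comp (measurable_pi_apply b)

lemma couplings_eq_withDensity (x : ι → ℝ) :
    couplings x = (baseVol ι).withDensity
      (fun j => ∏ b, gaussianPDF (x b) 1 (j b)) := by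
  refine Measure.pi_eq fun s hs => ?_
  rw [withDensity_apply _ (MeasurableSet.univ_pi hs),
    ← lintegral_indicator (MeasurableSet.univ_pi hs)]
  have hind : (univ.pi s).indicator (fun j => ∏ b, gaussianPDF (x b) 1 (j b))
      = fun j => ∏ b, ((s b).indicator (gaussianPDF (x b) 1)) (j b) := by
    funext j
    by_cases hj : j ∈ univ.pi s
    · rw [indicator_of_mem hj]
      exact Finset.prod_congr rfl fun c _ =>
        (indicator_of_mem (hj c (mem_univ c)) _).symm
    · rw [indicator_of_notMem hj]
      obtain ⟨c, hc⟩ : ∃ c, j c ∉ s c := by simpa [Set.mem_pi] using hj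
      exact (Finset.prod_eq_zero (Finset.mem_univ c) (by simp [indicator_of_notMem hc])).symm
  rw [hind, lintegral_fintype_prod_eq_prod' volume _
    (fun c => (measurable_gaussianPDF (x c) 1).indicator (hs c))]
  refine Finset.prod_congr rfl fun c _ => ?_
  rw [gaussianReal_apply _ one_ne_zero, ← lintegral_indicator (hs c)]

lemma integral_couplings (x : ι → ℝ) (g : (ι → ℝ) → ℝ) :
    ∫ j, g j ∂(couplings x) = ∫ j, g j * gaussDen x j ∂(baseVol ι) := by
  rw [couplings_eq_withDensity]
  have hD : (fun j : ι → ℝ => ∏ b, gaussianPDF (x b) 1 (j b))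
      = fun j => ((fun j => ∏ b, Real.toNNReal (gaussianPDFReal (x b) 1 (j b))) j : ℝ≥0∞) := by
    funext j
    rw [ENNReal.coe_finset_prod]
    exact Finset.prod_congr rfl fun c _ => rfl
  rw [hD, integral_withDensity_eq_integral_smul
    (f := fun j : ι → ℝ => ∏ b, (gaussianPDFReal (x b) 1 (j b)).toNNReal)
    (show Measurable fun j : ι → ℝ => ∏ b, (gaussianPDFReal (x b) 1 (j b)).toNNReal from
      Finset.measurable_prod _ fun c _ =>
        Measurable.real_toNNReal ((measurable_gaussianPDFReal (x c) 1).comp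
          (measurable_pi_apply c))) g]
  refine integral_congr_ae (ae_of_all _ fun j => ?_)
  show (∏ b, (gaussianPDFReal (x b) 1 (j b)).toNNReal) • g j = g j * gaussDen x j
  rw [NNReal.smul_def, smul_eq_mul, mul_comm]
  congr 1
  rw [gaussDen, NNReal.coe_prod]
  exact Finset.prod_congr rfl fun c _ =>
    Real.coe_toNNReal _ (gaussianPDFReal_nonneg _ _ _)

lemma gaussianPDFReal_sign_mul (m t ε : ℝ) (hε : ε ^ 2 = 1) :
    gaussianPDFReal m 1 (ε * t) = gaussianPDFReal m 1 t * Real.exp (m * t * (ε - 1)) := by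
  simp only [gaussianPDFReal, NNReal.coe_one, mul_one]
  rw [mul_assoc, ← Real.exp_add]
  congr 1
  have key : (ε * t - m) ^ 2 = (t - m) ^ 2 - 2 * (m * t * (ε - 1)) := by
    linear_combination t ^ 2 * hε
  rw [key]
  ring

lemma gaussianPDFReal_sign_arg (m t ε : ℝ) (hε : ε ^ 2 = 1) :
    gaussianPDFReal m 1 (ε * t) = gaussianPDFReal (ε * m) 1 t := by
  simp only [gaussianPDFReal, NNReal.coe_one, mul_one]
  congr 1
  have key : (ε * t - m) ^ 2 = (t - ε * m) ^ 2 := by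
    linear_combination (t ^ 2 - m ^ 2) * hε
  rw [key]

end GaussDen

/-! ### Gauge transformation as a measure-preserving map -/

section Gauge

open Set ENNReal NNReal

variable {V ι : Type*} [Fintype ι]

lemma bondSpin_eq_one_or (ep : ι → V × V) (τ : V → Bool) (c : ι) :
    bondSpin ep τ c = 1 ∨ bondSpin ep τ c = -1 := by
  have h := bondSpin_sq ep τ c
  have : (bondSpin ep τ c - 1) * (bondSpin ep τ c + 1) = 0 := by linear_combination h
  rcases mul_eq_zero.mp this with h' | h'
  · left; linarith
  · right; linarith

lemma measurable_gtw (ep : ι → V × V) (τ : V → Bool) : Measurable (gtw ep τ) :=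
  measurable_pi_lambda _ fun c => (measurable_pi_apply c).const_mul _

/-- the gauge transformation as a measurable equivalence -/
def gtwEquiv (ep : ι → V × V) (τ : V → Bool) : (ι → ℝ) ≃ᵐ (ι → ℝ) where
  toEquiv := ⟨gtw ep τ, gtw ep τ, gtw_gtw ep τ, gtw_gtw ep τ⟩
  measurable_toFun := measurable_gtw ep τ
  measurable_invFun := measurable_gtw ep τ

lemma measurePreserving_gtw (ep : ι → V × V) (τ : V → Bool) :
    MeasurePreserving (gtw ep τ) (baseVol ι) (baseVol ι) := by
  refine measurePreserving_pi (fun _ => (volume : Measure ℝ)) (fun _ => (volume : Measure ℝ))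
    (f := fun c t => bondSpin ep τ c * t) (fun c => ?_)
  show MeasurePreserving (fun t : ℝ => bondSpin ep τ c * t) volume volume
  rcases bondSpin_eq_one_or ep τ c with h | h
  · simp only [h, one_mul]
    exact MeasurePreserving.id (volume : Measure ℝ)
  · have heq : (fun t : ℝ => bondSpin ep τ c * t) = fun t : ℝ => -t := by
      funext t; rw [h]; ring
    rw [heq]
    exact Measure.measurePreserving_neg _

lemma integral_gtw (ep : ι → V × V) (τ : V → Bool) (g : (ι → ℝ) → ℝ) :
    ∫ j, g j ∂(baseVol ι) = ∫ j, g (gtw ep τ j) ∂(baseVol ι) :=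
  ((measurePreserving_gtw ep τ).integral_comp
    (MeasurableEquiv.measurableEmbedding (gtwEquiv ep τ)) g).symm

lemma gaussDen_gtw [Fintype V] (ep : ι → V × V) (x j : ι → ℝ) (τ : V → Bool) :
    gaussDen x (gtw ep τ j)
      = Real.exp (potential ep x j τ - ∑ c, x c * j c) * gaussDen x j := by
  unfold gaussDen gtw
  calc (∏ c, gaussianPDFReal (x c) 1 (bondSpin ep τ c * j c))
      = ∏ c, gaussianPDFReal (x c) 1 (j c) * Real.exp (x c * j c * (bondSpin ep τ c - 1)) :=
        Finset.prod_congr rfl fun c _ =>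
          gaussianPDFReal_sign_mul (x c) (j c) _ (bondSpin_sq ep τ c)
    _ = (∏ c, gaussianPDFReal (x c) 1 (j c))
          * ∏ c, Real.exp (x c * j c * (bondSpin ep τ c - 1)) := Finset.prod_mul_distrib
    _ = Real.exp (potential ep x j τ - ∑ c, x c * j c)
          * ∏ c, gaussianPDFReal (x c) 1 (j c) := by
        rw [← Real.exp_sum, mul_comm]
        congr 2
        rw [potential, ← Finset.sum_sub_distrib]
        exact Finset.sum_congr rfl fun c _ => by ring

/-- integrability of a bounded measurable function against the transformed density -/
lemma integrable_gtw_den [Fintype V] (ep : ι → V × V) (x : ι → ℝ) (τ : V → Bool)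
    (F : (ι → ℝ) → ℝ) (hFm : Measurable F) (hFb : ∀ j, |F j| ≤ 1) :
    Integrable (fun j => F (gtw ep τ j) * gaussDen x (gtw ep τ j)) (baseVol ι) := by
  have hG : Integrable (fun j : ι → ℝ =>
      ∏ c, gaussianPDFReal (bondSpin ep τ c * x c) 1 (j c)) (baseVol ι) := by
    have := MeasureTheory.Integrable.fintype_prod
      (f := fun c : ι => fun t : ℝ => gaussianPDFReal (bondSpin ep τ c * x c) 1 t)
      (fun c => integrable_gaussianPDFReal _ _)
    exact this
  refine hG.mono ?_ (ae_of_all _ fun j => ?_)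
  · exact ((hFm.comp (measurable_gtw ep τ)).mul
      ((measurable_gaussDen x).comp (measurable_gtw ep τ))).aestronglyMeasurable
  · have hden : gaussDen x (gtw ep τ j)
        = ∏ c, gaussianPDFReal (bondSpin ep τ c * x c) 1 (j c) := by
      unfold gaussDen gtw
      exact Finset.prod_congr rfl fun c _ =>
        gaussianPDFReal_sign_arg (x c) (j c) _ (bondSpin_sq ep τ c)
    have h0 : 0 ≤ gaussDen x (gtw ep τ j) := gaussDen_nonneg _ _
    rw [Real.norm_eq_abs, Real.norm_eq_abs, abs_mul]
    calc |F (gtw ep τ j)| * |gaussDen x (gtw ep τ j)|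
        ≤ 1 * |gaussDen x (gtw ep τ j)| := mul_le_mul_of_nonneg_right (hFb _) (abs_nonneg _)
      _ = gaussDen x (gtw ep τ j) := by rw [one_mul, abs_of_nonneg h0]
      _ = ∏ c, gaussianPDFReal (bondSpin ep τ c * x c) 1 (j c) := hden
      _ = |∏ c, gaussianPDFReal (bondSpin ep τ c * x c) 1 (j c)| :=
          (abs_of_nonneg (Finset.prod_nonneg fun c _ =>
            gaussianPDFReal_nonneg _ _ _)).symm

end Gauge

/-! ### The gauge-averaging master formula -/

section Master

open Set ENNReal NNReal

variable {V ι : Type*} [Fintype V] [DecidableEq V] [Fintype ι]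

lemma quenched_gauge_avg (ep : ι → V × V) (x : ι → ℝ)
    (F : (ι → ℝ) → ℝ) (hFm : Measurable F) (hFb : ∀ j, |F j| ≤ 1) :
    quenched x F = ((Fintype.card (V → Bool) : ℝ))⁻¹
      * ∫ j, ∑ τ : V → Bool, F (gtw ep τ j) * gaussDen x (gtw ep τ j) ∂(baseVol ι) := by
  rw [quenched, integral_couplings]
  have hsum : ∫ j, ∑ τ : V → Bool, F (gtw ep τ j) * gaussDen x (gtw ep τ j) ∂(baseVol ι)
      = ∑ τ : V → Bool, ∫ j, F (gtw ep τ j) * gaussDen x (gtw ep τ j) ∂(baseVol ι) :=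
    integral_finset_sum _ (fun τ _ => integrable_gtw_den ep x τ F hFm hFb)
  have hper : ∀ τ : V → Bool,
      ∫ j, F (gtw ep τ j) * gaussDen x (gtw ep τ j) ∂(baseVol ι)
        = ∫ j, F j * gaussDen x j ∂(baseVol ι) :=
    fun τ => (integral_gtw ep τ (fun j => F j * gaussDen x j)).symm
  rw [hsum]
  rw [Finset.sum_congr rfl (fun τ _ => hper τ), Finset.sum_const, Finset.card_univ,
    nsmul_eq_mul, ← mul_assoc, inv_mul_cancel₀ (by
      exact_mod_cast Fintype.card_ne_zero), one_mul]

end Master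

/-- Nishimori gauge identity mixing one- and two-bond correlations:
for all bonds `b, b'`, `[⟨S_b⟩⟨S_{b'}⟩] = [⟨S_b S_{b'}⟩⟨S_{b'}⟩]`. -/
theorem nishimori_mixed_identity
    {V ι : Type*} [Fintype V] [DecidableEq V] [Fintype ι]
    (ep : ι → V × V) (hep : ∀ b, (ep b).1 ≠ (ep b).2)
    (x : ι → ℝ) (hx : ∀ b, 0 ≤ x b) (b b' : ι) :
    quenched x (fun j =>
        gibbs ep x j (fun S => bondSpin ep S b) * gibbs ep x j (fun S => bondSpin ep S b')) =
      quenched x (fun j =>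
        gibbs ep x j (fun S => bondSpin ep S b * bondSpin ep S b') *
          gibbs ep x j (fun S => bondSpin ep S b')) := by
  classical
  set FL : (ι → ℝ) → ℝ := fun j =>
    gibbs ep x j (fun S => bondSpin ep S b) * gibbs ep x j (fun S => bondSpin ep S b') with hFL
  set FR : (ι → ℝ) → ℝ := fun j =>
    gibbs ep x j (fun S => bondSpin ep S b * bondSpin ep S b') *
      gibbs ep x j (fun S => bondSpin ep S b') with hFR
  have hFLm : Measurable FL := (measurable_gibbs ep x _).mul (measurable_gibbs ep x _)
  have hFRm : Measurable FR := (measurable_gibbs ep x _).mul (measurable_gibbs ep x _)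
  have habs2 : ∀ S : V → Bool, |bondSpin ep S b * bondSpin ep S b'| ≤ 1 := fun S => by
    rw [abs_mul, abs_bondSpin, abs_bondSpin]; norm_num
  have hFLb : ∀ j, |FL j| ≤ 1 := fun j => by
    rw [hFL, abs_mul]
    exact mul_le_one₀ (gibbs_bound ep x j _ (fun S => le_of_eq (abs_bondSpin ep S b)))
      (abs_nonneg _) (gibbs_bound ep x j _ (fun S => le_of_eq (abs_bondSpin ep S b')))
  have hFRb : ∀ j, |FR j| ≤ 1 := fun j => by
    rw [hFR, abs_mul]
    exact mul_le_one₀ (gibbs_bound ep x j _ habs2)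
      (abs_nonneg _) (gibbs_bound ep x j _ (fun S => le_of_eq (abs_bondSpin ep S b')))
  have hgb : ∀ (j : ι → ℝ) (τ : V → Bool) (c : ι),
      gibbs ep x (gtw ep τ j) (fun S => bondSpin ep S c)
        = bondSpin ep τ c * gibbs ep x j (fun S => bondSpin ep S c) := by
    intro j τ c
    rw [gibbs_gtw]
    simp_rw [bondSpin_gflip]
    rw [gibbs_const_mul]
  have hgbb' : ∀ (j : ι → ℝ) (τ : V → Bool),
      gibbs ep x (gtw ep τ j) (fun S => bondSpin ep S b * bondSpin ep S b')
        = bondSpin ep τ b * bondSpin ep τ b'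
            * gibbs ep x j (fun S => bondSpin ep S b * bondSpin ep S b') := by
    intro j τ
    rw [gibbs_gtw]
    have heq : (fun S => bondSpin ep (gflip τ S) b * bondSpin ep (gflip τ S) b')
        = fun S => (bondSpin ep τ b * bondSpin ep τ b')
            * (bondSpin ep S b * bondSpin ep S b') := by
      funext S; rw [bondSpin_gflip, bondSpin_gflip]; ring
    rw [heq, gibbs_const_mul]
  have hden : ∀ (j : ι → ℝ) (τ : V → Bool), gaussDen x (gtw ep τ j)
      = Real.exp (potential ep x j τ)
          * (Real.exp (-(∑ c, x c * j c)) * gaussDen x j) := by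
    intro j τ
    rw [gaussDen_gtw, Real.exp_sub, div_eq_mul_inv, ← Real.exp_neg]
    ring
  have hptw : ∀ j : ι → ℝ,
      ∑ τ : V → Bool, FL (gtw ep τ j) * gaussDen x (gtw ep τ j)
        = ∑ τ : V → Bool, FR (gtw ep τ j) * gaussDen x (gtw ep τ j) := by
    intro j
    calc ∑ τ : V → Bool, FL (gtw ep τ j) * gaussDen x (gtw ep τ j)
        = ∑ τ : V → Bool,
            (bondSpin ep τ b * bondSpin ep τ b' * Real.exp (potential ep x j τ))
            * (gibbs ep x j (fun S => bondSpin ep S b)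
                * gibbs ep x j (fun S => bondSpin ep S b')
                * (Real.exp (-(∑ c, x c * j c)) * gaussDen x j)) := by
          refine Finset.sum_congr rfl fun τ _ => ?_
          show gibbs ep x (gtw ep τ j) (fun S => bondSpin ep S b)
              * gibbs ep x (gtw ep τ j) (fun S => bondSpin ep S b')
              * gaussDen x (gtw ep τ j) = _
          rw [hgb j τ b, hgb j τ b', hden j τ]
          ring
      _ = (∑ τ : V → Bool,
            bondSpin ep τ b * bondSpin ep τ b' * Real.exp (potential ep x j τ))
            * (gibbs ep x j (fun S => bondSpin ep S b)
                * gibbs ep x j (fun S => bondSpin ep S b')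
                * (Real.exp (-(∑ c, x c * j c)) * gaussDen x j)) := by
          rw [← Finset.sum_mul]
      _ = (∑ τ : V → Bool, bondSpin ep τ b * Real.exp (potential ep x j τ))
            * (gibbs ep x j (fun S => bondSpin ep S b * bondSpin ep S b')
                * gibbs ep x j (fun S => bondSpin ep S b')
                * (Real.exp (-(∑ c, x c * j c)) * gaussDen x j)) := by
          simp only [gibbs]
          ring
      _ = ∑ τ : V → Bool,
            (bondSpin ep τ b * Real.exp (potential ep x j τ))
            * (gibbs ep x j (fun S => bondSpin ep S b * bondSpin ep S b')
                * gibbs ep x j (fun S => bondSpin ep S b')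
                * (Real.exp (-(∑ c, x c * j c)) * gaussDen x j)) := by
          rw [← Finset.sum_mul]
      _ = ∑ τ : V → Bool, FR (gtw ep τ j) * gaussDen x (gtw ep τ j) := by
          refine Finset.sum_congr rfl fun τ _ => ?_
          show _ = gibbs ep x (gtw ep τ j) (fun S => bondSpin ep S b * bondSpin ep S b')
              * gibbs ep x (gtw ep τ j) (fun S => bondSpin ep S b')
              * gaussDen x (gtw ep τ j)
          rw [hgbb' j τ, hgb j τ b', hden j τ]
          have hsq := bondSpin_sq ep τ b'
          linear_combination (-(bondSpin ep τ b * Real.exp (potential ep x j τ)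
            * gibbs ep x j (fun S => bondSpin ep S b * bondSpin ep S b')
            * gibbs ep x j (fun S => bondSpin ep S b')
            * (Real.exp (-(∑ c, x c * j c)) * gaussDen x j))) * hsq
  rw [quenched_gauge_avg ep x FL hFLm hFLb, quenched_gauge_avg ep x FR hFRm hFRb,
    show (fun j => ∑ τ : V → Bool, FL (gtw ep τ j) * gaussDen x (gtw ep τ j))
        = (fun j => ∑ τ : V → Bool, FR (gtw ep τ j) * gaussDen x (gtw ep τ j)) from
      funext hptw]

end
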